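/- For all nonnegative integers m₁, m₂ and all real x with |x| < 1, (1/binom(m₁+m₂, m₂)) · ∑_{k=0}^{m₁} binom(m₂+m₁-k, m₂) · binom((m₂+m₁)/2, k) · x^k = ₂F₁(-(m₁+m₂)/2, -m₁; -m₁-m₂; -x), interpreting the hypergeometric series as the (terminating) finite sum since -m₁ is a nonpositive integer. -/

import Mathlib

/-- Generalized binomial coefficient `x(x-1)⋯(x-k+1)/k!` with real upper argument. -/
noncomputable def gchoose (x : ℝ) (k : ℕ) : ℝ :=
  (∏ i ∈ Finset.range k, (x - i)) / (Nat.factorial k)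

/-- Pochhammer symbol `(x)_k = x(x+1)⋯(x+k-1)`. -/
noncomputable def poch (x : ℝ) (k : ℕ) : ℝ := ∏ i ∈ Finset.range k, (x + i)

lemma pochB (y : ℝ) (k : ℕ) : poch (-y) k = (-1)^k * ∏ i ∈ Finset.range k, (y - i) := by
  induction k with
  | zero => simp [poch]
  | succ k ih =>
    rw [poch, Finset.prod_range_succ, ← poch, ih, Finset.prod_range_succ]
    ring

lemma pochA (n k : ℕ) : poch (-(n:ℝ)) k = (-1)^k * (n.descFactorial k : ℝ) := by
  induction k with
  | zero => simp [poch]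
  | succ k ih =>
    rcases le_or_gt (k+1) n with h | h
    · rw [poch, Finset.prod_range_succ, ← poch, ih, Nat.descFactorial_succ]
      have hc : ((n - k : ℕ) : ℝ) = (n : ℝ) - k := by
        have : k ≤ n := by omega
        push_cast [this]; ring
      push_cast [hc]
      ring
    · have h1 : n.descFactorial (k+1) = 0 := Nat.descFactorial_eq_zero_iff_lt.mpr h
      have h2 : poch (-(n:ℝ)) (k+1) = 0 := by
        apply Finset.prod_eq_zero (Finset.mem_range.mpr h)
        simp
      rw [h1, h2]; simp

lemma key (m₁ m₂ k : ℕ) (hk : k ≤ m₁) :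
    (m₂ + m₁ - k).choose m₂ * (m₁ + m₂).descFactorial k
      = (m₁ + m₂).choose m₂ * m₁.descFactorial k := by
  have e1 : m₂ + m₁ - k = m₁ + m₂ - k := by omega
  have h1 := Nat.choose_mul_factorial_mul_factorial (show m₂ ≤ m₂ + m₁ - k by omega)
  have h3 := Nat.factorial_mul_descFactorial (show k ≤ m₁ + m₂ by omega)
  have h4 := Nat.factorial_mul_descFactorial hk
  have h2 := Nat.choose_mul_factorial_mul_factorial (show m₂ ≤ m₁ + m₂ by omega)
  have e2 : m₂ + m₁ - k - m₂ = m₁ - k := by omega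
  have e3 : m₁ + m₂ - m₂ = m₁ := by omega
  rw [e2] at h1; rw [e3] at h2
  apply Nat.eq_of_mul_eq_mul_right
    (show 0 < Nat.factorial m₂ * Nat.factorial (m₁ - k) from
      Nat.mul_pos (Nat.factorial_pos _) (Nat.factorial_pos _))
  calc (m₂ + m₁ - k).choose m₂ * (m₁ + m₂).descFactorial k
        * (Nat.factorial m₂ * Nat.factorial (m₁ - k))
      = ((m₂ + m₁ - k).choose m₂ * Nat.factorial m₂ * Nat.factorial (m₁ - k))
        * (m₁ + m₂).descFactorial k := by ring
    _ = Nat.factorial (m₂ + m₁ - k) * (m₁ + m₂).descFactorial k := by rw [h1]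
    _ = Nat.factorial (m₁ + m₂ - k) * (m₁ + m₂).descFactorial k := by rw [e1]
    _ = Nat.factorial (m₁ + m₂) := h3
    _ = (m₁ + m₂).choose m₂ * Nat.factorial m₂ * Nat.factorial m₁ := h2.symm
    _ = (m₁ + m₂).choose m₂ * Nat.factorial m₂
        * (Nat.factorial (m₁ - k) * m₁.descFactorial k) := by rw [h4]
    _ = (m₁ + m₂).choose m₂ * m₁.descFactorial k
        * (Nat.factorial m₂ * Nat.factorial (m₁ - k)) := by ring

theorem stmt19 (m₁ m₂ : ℕ) (x : ℝ) (hx : |x| < 1) :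
    (1 / ((m₁ + m₂).choose m₂ : ℝ)) * ∑ k ∈ Finset.range (m₁ + 1),
        ((m₂ + m₁ - k).choose m₂ : ℝ) * gchoose ((m₂ + m₁ : ℝ) / 2) k * x ^ k
      = ∑ k ∈ Finset.range (m₁ + 1),
          poch (-(m₁ + m₂ : ℝ) / 2) k * poch (-(m₁ : ℝ)) k / poch (-(m₁ : ℝ) - (m₂ : ℝ)) k
            * (-x) ^ k / (Nat.factorial k) := by
  rw [Finset.mul_sum]
  refine Finset.sum_congr rfl fun k hk => ?_
  have hkm : k ≤ m₁ := by simpa [Nat.lt_succ_iff] using Finset.mem_range.mp hk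
  have e1 : -(m₁ + m₂ : ℝ) / 2 = -((m₂ + m₁ : ℝ) / 2) := by push_cast; ring
  have e2 : -(m₁ : ℝ) - (m₂ : ℝ) = -((m₁ + m₂ : ℕ) : ℝ) := by push_cast; ring
  simp only [show m₂ + m₁ = m₁ + m₂ from Nat.add_comm m₂ m₁]
  have e1' : -(m₁ + m₂ : ℝ) / 2 = -((m₁ + m₂ : ℝ) / 2) := by ring
  rw [e1', e2, pochB, pochA, pochA, gchoose, neg_pow]
  set P : ℝ := ∏ i ∈ Finset.range k, ((m₁ + m₂ : ℝ) / 2 - i) with hPdef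
  have hg : (∏ i ∈ Finset.range k, ((m₂ + m₁ : ℝ) / 2 - i)) = P :=
    Finset.prod_congr rfl (fun i _ => by ring)
  rw [hg]
  have hkey : (((m₁ + m₂ - k).choose m₂ : ℝ)) * ((m₁ + m₂).descFactorial k : ℝ)
      = ((m₁ + m₂).choose m₂ : ℝ) * (m₁.descFactorial k : ℝ) := by
    have := key m₁ m₂ k hkm
    rw [show m₂ + m₁ - k = m₁ + m₂ - k by omega] at this
    exact_mod_cast congrArg (Nat.cast : ℕ → ℝ) this
  have hC : ((m₁ + m₂).choose m₂ : ℝ) ≠ 0 := by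
    exact_mod_cast (Nat.choose_pos (by omega)).ne'
  have hd : ((m₁ + m₂).descFactorial k : ℝ) ≠ 0 := by
    have : ¬ (m₁ + m₂ < k) := by omega
    exact_mod_cast fun h => this (Nat.descFactorial_eq_zero_iff_lt.mp (by exact_mod_cast h))
  have hf : (Nat.factorial k : ℝ) ≠ 0 := by exact_mod_cast (Nat.factorial_pos k).ne'
  set s : ℝ := (-1 : ℝ)^k with hsdef
  have hs : s ≠ 0 := by rw [hsdef]; positivity
  have hs2 : s * s = 1 := by
    rw [hsdef, ← pow_add, ← two_mul, pow_mul]; norm_num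
  field_simp
  have ht : ((-1:ℝ))^k * ((-1:ℝ))^k = 1 := by rw [← hsdef]; exact hs2
  linear_combination (P * x^k * (1 - (Nat.factorial k : ℝ) * ((-1:ℝ))^k)) * hkey
    + (P * x^k * ((m₁ + m₂).choose m₂ : ℝ) * (m₁.descFactorial k : ℝ)
        * ((Nat.factorial k : ℝ) * ((-1:ℝ))^k - 1)) * ht
    + (P * x^k * (Nat.factorial k : ℝ) * ((-1:ℝ))^k) * hkey
    - (P * x^k * (Nat.factorial k : ℝ) * ((-1:ℝ))^k * ((m₁ + m₂).choose m₂ : ℝ)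
        * (m₁.descFactorial k : ℝ)) * ht
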